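/- Let c₁ < c₂ be real numbers, let g be a real polynomial that is not identically zero, let k < p be natural numbers, let α : ℕ → ℝ satisfy α_{k+1} ≠ 0, and let f(ξ) = Σ_{m=k+1}^{p} α_m ξ^m. Then, as δ → 0⁺, the squared L² norm ∫_{c₁}^{c₂}∫_0^δ (g(ξ₁))²(f(ξ₂))² dξ₂ dξ₁ of the tensor-product function φ(ξ₁,ξ₂) = g(ξ₁)f(ξ₂) on [c₁,c₂] × [0,δ] is Θ(δ^{2k+3}). -/

import Mathlib

open Topology Asymptotics Polynomial

lemma isTheta_mul_of_tendsto {u v : ℝ → ℝ} {l : Filter ℝ} {L : ℝ} (hL : L ≠ 0)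
    (h : Filter.Tendsto u l (𝓝 L)) : (fun x => u x * v x) =Θ[l] v := by
  have habs : Filter.Tendsto (fun x => |u x|) l (𝓝 |L|) := h.abs
  constructor
  · apply IsBigO.of_bound (|L| + 1)
    filter_upwards [habs.eventually (eventually_lt_nhds (lt_add_one |L|))] with x hx
    simp only [Real.norm_eq_abs, abs_mul]
    nlinarith [abs_nonneg (v x), abs_nonneg (u x)]
  · apply IsBigO.of_bound (2 / |L|)
    have hL2 : 0 < |L| := abs_pos.2 hL
    filter_upwards [habs.eventually (eventually_gt_nhds (half_lt_self hL2))] with x hx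
    simp only [Real.norm_eq_abs, abs_mul]
    rw [div_mul_eq_mul_div, le_div_iff₀ hL2]
    nlinarith [abs_nonneg (v x)]

/-- Configuration (a): for `φ(ξ₁,ξ₂) = g(ξ₁) f(ξ₂)` with `g` a nonzero polynomial and
`f(ξ) = ∑_{m=k+1}^{p} α_m ξ^m`, `α_{k+1} ≠ 0`, the squared `L²` norm of `φ` on
`[c₁,c₂] × [0,δ]` is `Θ(δ^{2k+3})` as `δ → 0⁺`. -/
theorem l2_norm_asymptotics_config_a (c₁ c₂ : ℝ) (hc : c₁ < c₂)
    (g : Polynomial ℝ) (hg : g ≠ 0)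
    (k p : ℕ) (hkp : k < p) (α : ℕ → ℝ) (hα : α (k + 1) ≠ 0) :
    (fun δ : ℝ => ∫ ξ₁ in c₁..c₂, ∫ ξ₂ in (0:ℝ)..δ,
        (g.eval ξ₁) ^ 2 * (∑ m ∈ Finset.Icc (k + 1) p, α m * ξ₂ ^ m) ^ 2)
      =Θ[𝓝[>] (0:ℝ)] (fun δ : ℝ => δ ^ (2 * k + 3)) := by
  set C : ℝ := ∫ ξ₁ in c₁..c₂, (g.eval ξ₁) ^ 2 with hC
  set s := Finset.Icc (k + 1) p with hs
  -- C > 0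
  have hCpos : 0 < C := by
    apply intervalIntegral.integral_pos hc ((g.continuous.pow 2).continuousOn)
      (fun x _ => sq_nonneg _)
    obtain ⟨x, hx⟩ := ((Set.Icc_infinite hc).diff (g.finite_setOf_isRoot hg)).nonempty
    exact ⟨x, hx.1, by
      have : g.eval x ≠ 0 := hx.2
      show 0 < g.eval x ^ 2
      exact lt_of_le_of_ne (sq_nonneg _) (Ne.symm (pow_ne_zero 2 this))⟩
  -- inner integral computation
  have inner : ∀ δ : ℝ, (∫ ξ₂ in (0:ℝ)..δ, (∑ m ∈ s, α m * ξ₂ ^ m) ^ 2)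
      = ∑ m ∈ s, ∑ m' ∈ s, (α m * α m' / (m + m' + 1)) * δ ^ (m + m' + 1) := by
    intro δ
    have h1 : ∀ ξ₂ : ℝ, (∑ m ∈ s, α m * ξ₂ ^ m) ^ 2
        = ∑ m ∈ s, ∑ m' ∈ s, (α m * α m') * ξ₂ ^ (m + m') := by
      intro ξ₂
      rw [sq, Finset.sum_mul_sum]
      refine Finset.sum_congr rfl fun m _ => Finset.sum_congr rfl fun m' _ => ?_
      rw [pow_add]; ring
    simp only [h1]
    rw [intervalIntegral.integral_finset_sum]
    · refine Finset.sum_congr rfl fun m _ => ?_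
      rw [intervalIntegral.integral_finset_sum]
      · refine Finset.sum_congr rfl fun m' _ => ?_
        rw [intervalIntegral.integral_const_mul, integral_pow]
        rw [zero_pow (by omega)]
        push_cast
        ring
      · intro m' _
        exact (Continuous.intervalIntegrable (by continuity)) _ _
    · intro m _
      exact (Continuous.intervalIntegrable (by continuity)) _ _
  -- full computation
  have key : ∀ δ : ℝ, (∫ ξ₁ in c₁..c₂, ∫ ξ₂ in (0:ℝ)..δ,
        (g.eval ξ₁) ^ 2 * (∑ m ∈ s, α m * ξ₂ ^ m) ^ 2)
      = (C * ∑ m ∈ s, ∑ m' ∈ s, (α m * α m' / (m + m' + 1)) * δ ^ (m + m' - (2*k+2)))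
        * δ ^ (2 * k + 3) := by
    intro δ
    have h2 : ∀ ξ₁ : ℝ, (∫ ξ₂ in (0:ℝ)..δ, (g.eval ξ₁) ^ 2 * (∑ m ∈ s, α m * ξ₂ ^ m) ^ 2)
        = (g.eval ξ₁) ^ 2 * ∑ m ∈ s, ∑ m' ∈ s, (α m * α m' / (m + m' + 1)) * δ ^ (m + m' + 1) :=
      fun ξ₁ => by rw [intervalIntegral.integral_const_mul, inner δ]
    simp only [h2]
    rw [intervalIntegral.integral_mul_const, ← hC, mul_assoc, Finset.sum_mul]
    congr 1
    refine Finset.sum_congr rfl fun m hm => ?_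
    rw [Finset.sum_mul]
    refine Finset.sum_congr rfl fun m' hm' => ?_
    have hm1 : k + 1 ≤ m := (Finset.mem_Icc.mp hm).1
    have hm2 : k + 1 ≤ m' := (Finset.mem_Icc.mp hm').1
    rw [mul_assoc, ← pow_add]
    congr 2
    omega
  simp only [← hs, key]
  apply isTheta_mul_of_tendsto
    (L := C * ∑ m ∈ s, ∑ m' ∈ s, (α m * α m' / (m + m' + 1)) * (0:ℝ) ^ (m + m' - (2*k+2)))
  · -- L ≠ 0
    have hmem : k + 1 ∈ s := Finset.mem_Icc.mpr ⟨le_refl _, by omega⟩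
    have hsum : (∑ m ∈ s, ∑ m' ∈ s, (α m * α m' / (m + m' + 1)) * (0:ℝ) ^ (m + m' - (2*k+2)))
        = α (k+1) * α (k+1) / (2*k+3) := by
      rw [Finset.sum_eq_single_of_mem (k+1) hmem]
      · rw [Finset.sum_eq_single_of_mem (k+1) hmem]
        · have he : k + 1 + (k + 1) - (2*k+2) = 0 := by omega
          rw [he, pow_zero, mul_one]
          congr 1
          push_cast; ring
        · intro m' hm' hne
          have : k + 1 ≤ m' := (Finset.mem_Icc.mp hm').1
          rw [zero_pow (by omega)]; ring
      · intro m hm hne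
        have h1 : k + 1 ≤ m := (Finset.mem_Icc.mp hm).1
        apply Finset.sum_eq_zero
        intro m' hm'
        have h2 : k + 1 ≤ m' := (Finset.mem_Icc.mp hm').1
        rw [zero_pow (by omega)]; ring
    rw [hsum]
    have h3 : (0:ℝ) < 2*k+3 := by positivity
    apply mul_ne_zero hCpos.ne'
    apply div_ne_zero (mul_ne_zero hα hα) h3.ne'
  · -- tendsto
    have hcont : Continuous (fun δ : ℝ =>
        C * ∑ m ∈ s, ∑ m' ∈ s, (α m * α m' / (m + m' + 1)) * δ ^ (m + m' - (2*k+2))) := by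
      apply continuous_const.mul
      exact continuous_finset_sum _ fun m _ => continuous_finset_sum _ fun m' _ =>
        continuous_const.mul (continuous_pow _)
    exact (hcont.tendsto 0).mono_left nhdsWithin_le_nhds
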